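/- arXiv:1703.10347 — 2 statements merged into one kernel-verified Lean document; each statement's English description precedes it below -/
import Mathlib

section
/- Let k ≥ 3 be an integer. For every ε > 0 there exists a constant A > 0 such that for all real X ≥ 2, |V_k² ∫_0^∞ (⌊t⌋^{k/2} − t^{k/2})² e^{−t/X} dt − (k² V_k² Γ(k−1)/12) X^{k−1}| ≤ A X^{k−2+ε}, where ⌊t⌋ denotes the greatest integer ≤ t. -/
open scoped Real

/-- `rk k m` = number of ways to write `m` as a sum of `k` integer squares. -/
noncomputable def rk (k m : ℕ) : ℕ :=
  Nat.card {v : Fin k → ℤ // (∑ i, (v i) ^ 2) = (m : ℤ)}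

/-- `Sk k t` = number of lattice points of `ℤ^k` in the closed ball of radius `√t`. -/
noncomputable def Sk (k : ℕ) (t : ℝ) : ℕ :=
  Nat.card {v : Fin k → ℤ // (∑ i, ((v i : ℝ)) ^ 2) ≤ t}

/-- `Vk k` = volume of the unit ball in `ℝ^k`. -/
noncomputable def Vk (k : ℕ) : ℝ :=
  Real.pi ^ ((k : ℝ) / 2) / Real.Gamma ((k : ℝ) / 2 + 1)

/-- `Pk k t` = lattice point discrepancy of the `k`-dimensional ball of radius `√t`. -/
noncomputable def Pk (k : ℕ) (t : ℝ) : ℝ :=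
  (Sk k t : ℝ) - Vk k * t ^ ((k : ℝ) / 2)

/-- Value of the (analytically continued) Riemann zeta function at a real point. -/
noncomputable def rzeta (x : ℝ) : ℝ := (riemannZeta (x : ℂ)).re

/-- The Riemann zeta function with its 2-factor removed. -/
noncomputable def rzeta2 (x : ℝ) : ℝ := (1 - (2 : ℝ) ^ (-x)) * rzeta x

/-- The constant `C_k` for `k ≥ 4`. -/
noncomputable def Ck (k : ℕ) : ℝ :=
  ((k : ℝ) ^ 2 / 24) * (Vk k) ^ 2 +
    Real.pi ^ (k : ℝ) * rzeta ((k : ℝ) - 2) * (1 + (2 : ℝ) ^ ((3 : ℝ) - (k : ℝ))) /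
      (12 * (Real.Gamma ((k : ℝ) / 2)) ^ 2 * rzeta2 (k : ℝ))

set_option maxHeartbeats 1000000

open MeasureTheory Set

lemma LFT_one_sub_exp_le {u : ℝ} : 1 - Real.exp (-u) ≤ u := by
  have := Real.add_one_le_exp (-u); linarith

lemma LFT_one_sub_exp_ge {u : ℝ} (h0 : 0 ≤ u) (h1 : u ≤ 1) :
    u / 2 ≤ 1 - Real.exp (-u) := by
  have h := Real.add_one_le_exp u
  have hpos : (0:ℝ) < 1 + u := by linarith
  have h2 : Real.exp (-u) ≤ (1 + u)⁻¹ := by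
    rw [Real.exp_neg]
    exact inv_anti₀ hpos (by linarith)
  have h3 : (1 + u)⁻¹ ≤ 1 - u / 2 := by
    rw [inv_le_iff_one_le_mul₀ hpos]  -- guess
    nlinarith
  linarith

lemma LFT_exp_le_two {x : ℝ} (h0 : 0 ≤ x) (h1 : x ≤ 1/4) : Real.exp x ≤ 2 := by
  have h := Real.add_one_le_exp (-x)
  have h2 : Real.exp x * Real.exp (-x) = 1 := by
    rw [← Real.exp_add]; simp
  nlinarith [Real.exp_pos x, Real.exp_pos (-x)]

lemma LFT_mvt {f f' : ℝ → ℝ} {a b M t : ℝ}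
    (hd : ∀ x ∈ Icc a b, HasDerivAt f (f' x) x)
    (hM : ∀ x ∈ Icc a b, |f' x| ≤ M)
    (ha : a ∈ Icc a b) (ht : t ∈ Icc a b) :
    |f t - f a| ≤ M * |t - a| := by
  have := Convex.norm_image_sub_le_of_norm_hasDerivWithin_le
    (f := f) (f' := f') (s := Icc a b) (C := M)
    (fun x hx => (hd x hx).hasDerivWithinAt) (fun x hx => hM x hx) (convex_Icc a b) ha ht
  simpa [Real.norm_eq_abs] using this

lemma LFT_rpow_base_bound {q a x : ℝ} (hq : 0 < q) (ha : 1 ≤ a) (hx : x ∈ Icc a (a+1)) :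
    x ^ (q - 1) ≤ 2 ^ q * a ^ (q - 1) := by
  obtain ⟨hx1, hx2⟩ := hx
  have ha0 : (0:ℝ) < a := by linarith
  have hx0 : (0:ℝ) < x := by linarith
  have h2q : (1:ℝ) ≤ 2 ^ q := Real.one_le_rpow one_le_two hq.le
  rcases le_or_gt 1 q with h | h
  · calc x ^ (q-1) ≤ (2*a) ^ (q-1) :=
          Real.rpow_le_rpow hx0.le (by linarith) (by linarith)
    _ = 2 ^ (q-1) * a ^ (q-1) := Real.mul_rpow (by norm_num) ha0.le
    _ ≤ 2 ^ q * a ^ (q-1) := by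
        have := Real.rpow_le_rpow_of_exponent_le one_le_two (by linarith : q - 1 ≤ q)
        have := Real.rpow_nonneg ha0.le (q-1)
        nlinarith
  · have h1 : x ^ (q-1) ≤ a ^ (q-1) :=
      Real.rpow_le_rpow_of_nonpos ha0 hx1 (by linarith)
    have := Real.rpow_nonneg ha0.le (q-1)
    nlinarith

lemma LFT_rpow_sub_le {q a t : ℝ} (hq : 0 < q) (ha : 1 ≤ a) (ht : t ∈ Icc a (a+1)) :
    t ^ q - a ^ q ≤ q * 2 ^ q * a ^ (q - 1) * (t - a) := by
  have hd : ∀ x ∈ Icc a (a+1), HasDerivAt (fun y : ℝ => y ^ q) (q * x ^ (q-1)) x := by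
    intro x hx
    exact Real.hasDerivAt_rpow_const (Or.inl (by nlinarith [hx.1] : x ≠ 0))
  have hM : ∀ x ∈ Icc a (a+1), |q * x ^ (q-1)| ≤ q * (2 ^ q * a ^ (q-1)) := by
    intro x hx
    have hx0 : (0:ℝ) ≤ x := by linarith [hx.1]
    rw [abs_of_nonneg (mul_nonneg hq.le (Real.rpow_nonneg hx0 _))]
    exact mul_le_mul_of_nonneg_left (LFT_rpow_base_bound hq ha hx) hq.le
  have h := LFT_mvt hd hM (by constructor <;> linarith) ht
  rw [abs_of_nonneg (by linarith [ht.1] : (0:ℝ) ≤ t - a)] at h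
  calc t ^ q - a ^ q ≤ |t ^ q - a ^ q| := le_abs_self _
  _ ≤ q * (2 ^ q * a ^ (q-1)) * (t - a) := h
  _ = q * 2 ^ q * a ^ (q-1) * (t - a) := by ring

lemma LFT_rpow_taylor {p a t : ℝ} (hp : 3/2 ≤ p) (ha : 1 ≤ a) (ht : t ∈ Icc a (a+1)) :
    |t ^ p - a ^ p - p * a ^ (p-1) * (t - a)| ≤ p * p * 2 ^ p * a ^ (p - 2) := by
  have hq : (0:ℝ) < p - 1 := by linarith
  have ha0 : (0:ℝ) < a := by linarith
  set f : ℝ → ℝ := fun x => x ^ p - p * a ^ (p-1) * x with hf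
  set f' : ℝ → ℝ := fun x => p * x ^ (p-1) - p * a ^ (p-1) with hf'
  have hd : ∀ x ∈ Icc a (a+1), HasDerivAt f (f' x) x := by
    intro x hx
    have h1 : HasDerivAt (fun y : ℝ => y ^ p) (p * x ^ (p-1)) x :=
      Real.hasDerivAt_rpow_const (Or.inl (by nlinarith [hx.1] : x ≠ 0))
    simpa [hf, hf', Pi.sub_def] using h1.sub ((hasDerivAt_id x).const_mul (p * a ^ (p-1)))
  set M : ℝ := p * ((p-1) * 2 ^ (p-1) * a ^ (p-1-1)) with hMdef
  have hM : ∀ x ∈ Icc a (a+1), |f' x| ≤ M := by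
    intro x hx
    have h1 : x ^ (p-1) - a ^ (p-1) ≤ (p-1) * 2 ^ (p-1) * a ^ (p-1-1) * (x - a) := by
      simpa using LFT_rpow_sub_le hq ha hx
    have h2 : a ^ (p-1) ≤ x ^ (p-1) := Real.rpow_le_rpow ha0.le hx.1 hq.le
    have hxa1 : x - a ≤ 1 := by linarith [hx.2]
    have hxa0 : 0 ≤ x - a := by linarith [hx.1]
    have hb : (0:ℝ) ≤ (p-1) * 2 ^ (p-1) * a ^ (p-1-1) :=
      mul_nonneg (mul_nonneg (by linarith) (Real.rpow_nonneg (by norm_num) _))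
        (Real.rpow_nonneg ha0.le _)
    have hfx : f' x = p * (x ^ (p-1) - a ^ (p-1)) := by rw [hf']; ring
    rw [hfx, abs_of_nonneg (mul_nonneg (by linarith) (by linarith))]
    rw [hMdef]
    have h1' : x ^ (p-1) - a ^ (p-1) ≤ (p-1) * 2 ^ (p-1) * a ^ (p-1-1) :=
      h1.trans (mul_le_of_le_one_right hb hxa1)
    exact mul_le_mul_of_nonneg_left h1' (by linarith)
  have h := LFT_mvt hd hM (by constructor <;> linarith) ht
  have hft : f t - f a = t ^ p - a ^ p - p * a ^ (p-1) * (t - a) := by rw [hf]; ring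
  rw [hft] at h
  have hta : |t - a| ≤ 1 := by
    rw [abs_of_nonneg (by linarith [ht.1])]; linarith [ht.2]
  have hM0 : 0 ≤ M := by
    rw [hMdef]
    exact mul_nonneg (by linarith)
      (mul_nonneg (mul_nonneg (by linarith) (Real.rpow_nonneg (by norm_num) _))
        (Real.rpow_nonneg ha0.le _))
  have h2 : |t ^ p - a ^ p - p * a ^ (p-1) * (t - a)| ≤ M :=
    le_trans h (mul_le_of_le_one_right hM0 hta)
  refine h2.trans ?_
  rw [hMdef]
  have e1 : p - 1 - 1 = p - 2 := by ring
  rw [e1]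
  have h3 : (2:ℝ) ^ (p-1) ≤ 2 ^ p :=
    Real.rpow_le_rpow_of_exponent_le one_le_two (by linarith)
  have h4 : (0:ℝ) ≤ a ^ (p-2) := Real.rpow_nonneg ha0.le _
  have h5 : (0:ℝ) ≤ 2 ^ (p-1) := Real.rpow_nonneg (by norm_num) _
  have h6 : (p-1) * 2 ^ (p-1) ≤ p * 2 ^ p := mul_le_mul (by linarith) h3 h5 (by linarith)
  calc p * ((p-1) * 2 ^ (p-1) * a ^ (p-2))
      ≤ p * (p * 2 ^ p * a ^ (p-2)) := by
        refine mul_le_mul_of_nonneg_left ?_ (by linarith)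
        exact mul_le_mul_of_nonneg_right h6 h4
  _ = p * p * 2 ^ p * a ^ (p-2) := by ring

lemma LFT_exp_mono {X a t : ℝ} (hX : 0 < X) (hat : a ≤ t) :
    Real.exp (-t/X) ≤ Real.exp (-a/X) := by
  apply Real.exp_le_exp.mpr
  exact div_le_div_of_nonneg_right (by linarith) hX.le

lemma LFT_exp_interval {X a t : ℝ} (hX : 0 < X) (h1 : a ≤ t) (h2 : t ≤ a + 1) :
    |Real.exp (-t/X) - Real.exp (-a/X)| ≤ Real.exp (-a/X) / X := by
  rw [abs_sub_comm, abs_of_nonneg (by linarith [LFT_exp_mono hX h1])]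
  have key : Real.exp (-t/X) = Real.exp (-a/X) * Real.exp (-((t-a)/X)) := by
    rw [← Real.exp_add]; ring_nf
  rw [key]
  have h3 : 1 - Real.exp (-((t-a)/X)) ≤ (t-a)/X := LFT_one_sub_exp_le
  have h4 : (t-a)/X ≤ 1/X := div_le_div_of_nonneg_right (by linarith) hX.le
  have h5 : 0 < Real.exp (-a/X) := Real.exp_pos _
  have : Real.exp (-a/X) - Real.exp (-a/X) * Real.exp (-((t-a)/X))
      = Real.exp (-a/X) * (1 - Real.exp (-((t-a)/X))) := by ring
  rw [this]
  calc Real.exp (-a/X) * (1 - Real.exp (-((t-a)/X)))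
      ≤ Real.exp (-a/X) * (1/X) :=
        mul_le_mul_of_nonneg_left (h3.trans h4) h5.le
  _ = Real.exp (-a/X) / X := by ring

lemma LFT_contOn_rpow {q : ℝ} (hq : 0 ≤ q) (s : Set ℝ) :
    ContinuousOn (fun t : ℝ => t ^ q) s := fun x _ =>
  (Real.continuousAt_rpow_const x q (Or.inr hq)).continuousWithinAt

lemma LFT_integrableOn_Ico {f : ℝ → ℝ} {a b : ℝ} (h : ContinuousOn f (Icc a b)) :
    IntegrableOn f (Ico a b) :=
  (h.integrableOn_Icc).mono_set Ico_subset_Icc_self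

lemma LFT_sq_integral (a : ℝ) : ∫ t in Ico a (a+1), (t-a)^2 = 1/3 := by
  rw [MeasureTheory.integral_Ico_eq_integral_Ioo, ← MeasureTheory.integral_Ioc_eq_integral_Ioo,
    ← intervalIntegral.integral_of_le (by linarith : a ≤ a + 1)]
  have := intervalIntegral.integral_comp_sub_right (a := a) (b := a+1) (fun x : ℝ => x ^ 2) a
  rw [this]
  simp [integral_pow]
  norm_num

lemma LFT_vol_Ico (a : ℝ) : (volume (Ico a (a+1))).toReal = 1 := by
  rw [Real.volume_Ico]
  rw [ENNReal.toReal_ofReal (by linarith)]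
  ring

lemma LFT_abs_setIntegral_le {f : ℝ → ℝ} {a M : ℝ} (hM : ∀ t ∈ Ico a (a+1), |f t| ≤ M) :
    |∫ t in Ico a (a+1), f t| ≤ M := by
  have hs : volume (Ico a (a+1)) < ⊤ := by
    rw [Real.volume_Ico]; exact ENNReal.ofReal_lt_top
  have h := MeasureTheory.norm_setIntegral_le_of_norm_le_const (μ := volume) hs
    (f := f) (C := M)
    (fun x hx => by simpa [Real.norm_eq_abs] using hM x hx)
  rw [Real.norm_eq_abs] at h
  rw [measureReal_def, LFT_vol_Ico a] at h
  simpa using h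

lemma LFT_interval_est {p X : ℝ} (hp : 3/2 ≤ p) (hX : 2 ≤ X) (n : ℕ) :
    |(∫ t in Ico (n:ℝ) ((n:ℝ)+1), ((n:ℝ) ^ p - t ^ p) ^ 2 * Real.exp (-t/X))
      - p^2/3 * ∫ t in Ico (n:ℝ) ((n:ℝ)+1), t ^ (2*p-2) * Real.exp (-t/X)|
    ≤ (p^3 * 2^(2*p+2) + 2*p^2 + 2) *
      ((((n:ℝ)+1) ^ (2*p-3) * Real.exp (-(n:ℝ)/X)
        + ((n:ℝ)+1) ^ (2*p-2) * Real.exp (-(n:ℝ)/X) / X)) := by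
  have hX0 : (0:ℝ) < X := by linarith
  have hp0 : (0:ℝ) < p := by linarith
  have h2pow : (0:ℝ) ≤ (2:ℝ)^(2*p+2) := Real.rpow_nonneg (by norm_num) _
  rcases Nat.eq_zero_or_pos n with hn | hn
  · -- n = 0 case
    subst hn
    have h0p : ((0:ℕ):ℝ) ^ p = 0 := by
      rw [Nat.cast_zero]; exact Real.zero_rpow (by linarith)
    have hb1 : |∫ t in Ico ((0:ℕ):ℝ) (((0:ℕ):ℝ)+1), (((0:ℕ):ℝ) ^ p - t ^ p) ^ 2 * Real.exp (-t/X)| ≤ 1 := by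
      apply LFT_abs_setIntegral_le
      intro t ht
      have ht0 : 0 ≤ t := by simpa using ht.1
      have ht1 : t ≤ 1 := by
        have := ht.2; rw [Nat.cast_zero] at this; linarith
      have htp : t ^ p ≤ 1 := Real.rpow_le_one ht0 ht1 hp0.le
      have htp0 : 0 ≤ t ^ p := Real.rpow_nonneg ht0 _
      have hexp : Real.exp (-t/X) ≤ 1 := by
        rw [Real.exp_le_one_iff]
        apply div_nonpos_of_nonpos_of_nonneg <;> linarith
      have hexp0 : 0 < Real.exp (-t/X) := Real.exp_pos _
      rw [h0p, abs_mul, abs_of_nonneg (sq_nonneg _), abs_of_nonneg hexp0.le]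
      nlinarith
    have hb2 : |∫ t in Ico ((0:ℕ):ℝ) (((0:ℕ):ℝ)+1), t ^ (2*p-2) * Real.exp (-t/X)| ≤ 1 := by
      apply LFT_abs_setIntegral_le
      intro t ht
      have ht0 : 0 ≤ t := by simpa using ht.1
      have ht1 : t ≤ 1 := by
        have := ht.2; rw [Nat.cast_zero] at this; linarith
      have htp : t ^ (2*p-2) ≤ 1 := Real.rpow_le_one ht0 ht1 (by linarith)
      have htp0 : 0 ≤ t ^ (2*p-2) := Real.rpow_nonneg ht0 _
      have hexp : Real.exp (-t/X) ≤ 1 := by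
        rw [Real.exp_le_one_iff]
        apply div_nonpos_of_nonpos_of_nonneg <;> linarith
      have hexp0 : 0 < Real.exp (-t/X) := Real.exp_pos _
      rw [abs_mul, abs_of_nonneg htp0, abs_of_nonneg hexp0.le]
      nlinarith
    have habs : |(∫ t in Ico ((0:ℕ):ℝ) (((0:ℕ):ℝ)+1), (((0:ℕ):ℝ) ^ p - t ^ p) ^ 2 * Real.exp (-t/X))
        - p^2/3 * ∫ t in Ico ((0:ℕ):ℝ) (((0:ℕ):ℝ)+1), t ^ (2*p-2) * Real.exp (-t/X)| ≤ 1 + p^2/3 := by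
      have h2 : |p^2/3 * ∫ t in Ico ((0:ℕ):ℝ) (((0:ℕ):ℝ)+1), t ^ (2*p-2) * Real.exp (-t/X)| ≤ p^2/3 := by
        rw [abs_mul, abs_of_nonneg (by positivity : (0:ℝ) ≤ p^2/3)]
        nlinarith [abs_nonneg (∫ t in Ico ((0:ℕ):ℝ) (((0:ℕ):ℝ)+1), t ^ (2*p-2) * Real.exp (-t/X))]
      calc |(∫ t in Ico ((0:ℕ):ℝ) (((0:ℕ):ℝ)+1), (((0:ℕ):ℝ) ^ p - t ^ p) ^ 2 * Real.exp (-t/X))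
          - p^2/3 * ∫ t in Ico ((0:ℕ):ℝ) (((0:ℕ):ℝ)+1), t ^ (2*p-2) * Real.exp (-t/X)|
          ≤ |(∫ t in Ico ((0:ℕ):ℝ) (((0:ℕ):ℝ)+1), (((0:ℕ):ℝ) ^ p - t ^ p) ^ 2 * Real.exp (-t/X))|
            + |p^2/3 * ∫ t in Ico ((0:ℕ):ℝ) (((0:ℕ):ℝ)+1), t ^ (2*p-2) * Real.exp (-t/X)| :=
            abs_sub _ _
      _ ≤ 1 + p^2/3 := by linarith
    refine habs.trans ?_
    have e0 : (((0:ℕ):ℝ)+1) = 1 := by norm_num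
    rw [e0, Real.one_rpow, Real.one_rpow]
    have eexp : Real.exp (-((0:ℕ):ℝ)/X) = 1 := by norm_num
    rw [eexp]
    have hiX : 0 ≤ 1/X := by positivity
    have hp3 : 0 ≤ p^3 := by positivity
    have hprod : 0 ≤ p^3 * 2^(2*p+2) := mul_nonneg hp3 h2pow
    rw [div_eq_mul_inv, ← one_div]
    nlinarith
  · -- n ≥ 1
    set a : ℝ := (n:ℝ) with ha_def
    have ha : 1 ≤ a := by rw [ha_def]; exact_mod_cast Nat.one_le_iff_ne_zero.mpr hn.ne'
    have ha0 : (0:ℝ) < a := by linarith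
    have hEcont : Continuous (fun t : ℝ => Real.exp (-t/X)) :=
      Real.continuous_exp.comp ((continuous_id.neg).div_const X)
    have hEpos : ∀ t : ℝ, 0 < Real.exp (-t/X) := fun t => Real.exp_pos _
    -- the three functions
    set c2 : ℝ := p^2 * (a^(p-1) * a^(p-1)) * Real.exp (-a/X) with hc2_def
    -- integrability
    have hint1 : IntegrableOn (fun t => (a ^ p - t ^ p) ^ 2 * Real.exp (-t/X)) (Ico a (a+1)) := by
      apply LFT_integrableOn_Ico
      exact (((continuousOn_const.sub (LFT_contOn_rpow hp0.le _)).pow 2).mul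
        hEcont.continuousOn)
    have hint2 : IntegrableOn (fun t => c2 * (t-a)^2) (Ico a (a+1)) := by
      apply LFT_integrableOn_Ico
      exact (continuousOn_const.mul ((continuousOn_id.sub continuousOn_const).pow 2))
    have hint3 : IntegrableOn (fun t => p^2/3 * (t ^ (2*p-2) * Real.exp (-t/X))) (Ico a (a+1)) := by
      apply LFT_integrableOn_Ico
      exact (continuousOn_const.mul ((LFT_contOn_rpow (by linarith) _).mul hEcont.continuousOn))
    have hint4 : IntegrableOn (fun _ : ℝ => p^2/3 * (a^(p-1)*a^(p-1) * Real.exp (-a/X))) (Ico a (a+1)) := by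
      apply LFT_integrableOn_Ico; exact continuousOn_const
    -- value of ∫ g2
    have hg2val : (∫ t in Ico a (a+1), c2 * (t-a)^2) = p^2/3 * (a^(p-1)*a^(p-1) * Real.exp (-a/X)) := by
      rw [MeasureTheory.integral_const_mul, LFT_sq_integral]
      ring
    -- pointwise bound 1
    have hpt1 : ∀ t ∈ Ico a (a+1),
        |(a ^ p - t ^ p) ^ 2 * Real.exp (-t/X) - c2 * (t-a)^2|
        ≤ ((p*p*2^p*a^(p-2)) * (p*2^p*a^(p-1) + p*a^(p-1)) + (p*a^(p-1))^2/X) * Real.exp (-a/X) := by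
      intro t ht
      have htI : t ∈ Icc a (a+1) := ⟨ht.1, ht.2.le⟩
      have hta0 : 0 ≤ t - a := by linarith [ht.1]
      have hta1 : t - a ≤ 1 := by linarith [ht.2]
      set u : ℝ := t ^ p - a ^ p with hu_def
      set v : ℝ := p * a^(p-1) * (t-a) with hv_def
      have hu0 : 0 ≤ u := sub_nonneg.mpr (Real.rpow_le_rpow ha0.le ht.1 hp0.le)
      have hv0 : 0 ≤ v := by
        apply mul_nonneg (mul_nonneg hp0.le (Real.rpow_nonneg ha0.le _)) hta0
      have hPa : (0:ℝ) ≤ p * 2^p * a^(p-1) :=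
        mul_nonneg (mul_nonneg hp0.le (Real.rpow_nonneg (by norm_num) _))
          (Real.rpow_nonneg ha0.le _)
      have hu1 : u ≤ p * 2^p * a^(p-1) := by
        have h := LFT_rpow_sub_le hp0 ha htI
        exact h.trans (mul_le_of_le_one_right hPa hta1)
      have hv1 : v ≤ p * a^(p-1) :=
        mul_le_of_le_one_right (mul_nonneg hp0.le (Real.rpow_nonneg ha0.le _)) hta1
      have huv : |u - v| ≤ p*p*2^p*a^(p-2) := by
        have := LFT_rpow_taylor hp ha htI
        simpa [hu_def, hv_def, sub_sub] using this
      have hiden : (a ^ p - t ^ p) ^ 2 * Real.exp (-t/X) - c2 * (t-a)^2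
          = (u^2 - v^2) * Real.exp (-t/X) + v^2 * (Real.exp (-t/X) - Real.exp (-a/X)) := by
        rw [hu_def, hv_def, hc2_def]; ring
      rw [hiden]
      have hEa : Real.exp (-t/X) ≤ Real.exp (-a/X) := LFT_exp_mono hX0 ht.1
      have hEd : |Real.exp (-t/X) - Real.exp (-a/X)| ≤ Real.exp (-a/X) / X := LFT_exp_interval hX0 ht.1 (by linarith [ht.2])
      have h1 : |(u^2 - v^2) * Real.exp (-t/X)| ≤ (p*p*2^p*a^(p-2)) * (p*2^p*a^(p-1) + p*a^(p-1)) * Real.exp (-a/X) := by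
        rw [abs_mul]
        have : |u^2 - v^2| ≤ (p*p*2^p*a^(p-2)) * (p*2^p*a^(p-1) + p*a^(p-1)) := by
          have e1 : u^2 - v^2 = (u - v) * (u + v) := by ring
          rw [e1, abs_mul]
          apply mul_le_mul huv ?_ (abs_nonneg _)
            (mul_nonneg (mul_nonneg (mul_nonneg hp0.le hp0.le)
              (Real.rpow_nonneg (by norm_num) _)) (Real.rpow_nonneg ha0.le _))
          rw [abs_of_nonneg (by linarith)]
          linarith
        rw [abs_of_nonneg (hEpos t).le]
        apply mul_le_mul this hEa (hEpos t).le
        apply mul_nonneg (mul_nonneg (mul_nonneg (mul_nonneg hp0.le hp0.le)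
          (Real.rpow_nonneg (by norm_num) _)) (Real.rpow_nonneg ha0.le _))
        positivity
      have h2 : |v^2 * (Real.exp (-t/X) - Real.exp (-a/X))| ≤ (p*a^(p-1))^2/X * Real.exp (-a/X) := by
        rw [abs_mul]
        have hvsq : |v^2| ≤ (p*a^(p-1))^2 := by
          rw [abs_of_nonneg (sq_nonneg v)]
          exact pow_le_pow_left₀ hv0 hv1 2
        calc |v^2| * |Real.exp (-t/X) - Real.exp (-a/X)| ≤ (p*a^(p-1))^2 * (Real.exp (-a/X) / X) :=
              mul_le_mul hvsq hEd (abs_nonneg _) (sq_nonneg _)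
        _ = (p*a^(p-1))^2/X * Real.exp (-a/X) := by ring
      calc |(u^2 - v^2) * Real.exp (-t/X) + v^2 * (Real.exp (-t/X) - Real.exp (-a/X))|
          ≤ |(u^2 - v^2) * Real.exp (-t/X)| + |v^2 * (Real.exp (-t/X) - Real.exp (-a/X))| := abs_add_le _ _
      _ ≤ (p*p*2^p*a^(p-2)) * (p*2^p*a^(p-1) + p*a^(p-1)) * Real.exp (-a/X) + (p*a^(p-1))^2/X * Real.exp (-a/X) := by
          linarith
      _ = ((p*p*2^p*a^(p-2)) * (p*2^p*a^(p-1) + p*a^(p-1)) + (p*a^(p-1))^2/X) * Real.exp (-a/X) := by ring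
    -- pointwise bound 2
    have hpt2 : ∀ t ∈ Ico a (a+1),
        |p^2/3 * (a^(p-1)*a^(p-1) * Real.exp (-a/X)) - p^2/3 * (t ^ (2*p-2) * Real.exp (-t/X))|
        ≤ p^2/3 * (((2*p-2) * 2^(2*p-2) * a^(2*p-3)) + a^(2*p-2)/X) * Real.exp (-a/X) := by
      intro t ht
      have htI : t ∈ Icc a (a+1) := ⟨ht.1, ht.2.le⟩
      have hta1 : t - a ≤ 1 := by linarith [ht.2]
      have hq0 : (0:ℝ) < 2*p-2 := by linarith
      have haq : a^(p-1)*a^(p-1) = a^(2*p-2) := by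
        rw [← Real.rpow_add ha0]; congr 1; ring
      have hEa : Real.exp (-t/X) ≤ Real.exp (-a/X) := LFT_exp_mono hX0 ht.1
      have hEd : |Real.exp (-t/X) - Real.exp (-a/X)| ≤ Real.exp (-a/X) / X := LFT_exp_interval hX0 ht.1 (by linarith [ht.2])
      have hqsub : t^(2*p-2) - a^(2*p-2) ≤ (2*p-2) * 2^(2*p-2) * a^(2*p-3) := by
        have h := LFT_rpow_sub_le hq0 ha htI
        have e1 : 2*p-2-1 = 2*p-3 := by ring
        rw [e1] at h
        have hnn : (0:ℝ) ≤ (2*p-2) * 2^(2*p-2) * a^(2*p-3) :=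
          mul_nonneg (mul_nonneg (by linarith) (Real.rpow_nonneg (by norm_num) _))
            (Real.rpow_nonneg ha0.le _)
        exact h.trans (mul_le_of_le_one_right hnn hta1)
      have hq0' : 0 ≤ t^(2*p-2) - a^(2*p-2) :=
        sub_nonneg.mpr (Real.rpow_le_rpow ha0.le ht.1 hq0.le)
      have hiden : a^(p-1)*a^(p-1) * Real.exp (-a/X) - t ^ (2*p-2) * Real.exp (-t/X)
          = -((t^(2*p-2) - a^(2*p-2)) * Real.exp (-t/X)) - a^(2*p-2) * (Real.exp (-t/X) - Real.exp (-a/X)) := by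
        rw [haq]; ring
      rw [← mul_sub, abs_mul, hiden, abs_of_nonneg (by positivity : (0:ℝ) ≤ p^2/3), mul_assoc]
      apply mul_le_mul_of_nonneg_left ?_ (by positivity : (0:ℝ) ≤ p^2/3)
      calc |-((t^(2*p-2) - a^(2*p-2)) * Real.exp (-t/X)) - a^(2*p-2) * (Real.exp (-t/X) - Real.exp (-a/X))|
          ≤ |(t^(2*p-2) - a^(2*p-2)) * Real.exp (-t/X)| + |a^(2*p-2) * (Real.exp (-t/X) - Real.exp (-a/X))| := by
            have e2 : -((t^(2*p-2) - a^(2*p-2)) * Real.exp (-t/X)) - a^(2*p-2) * (Real.exp (-t/X) - Real.exp (-a/X))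
                = -((t^(2*p-2) - a^(2*p-2)) * Real.exp (-t/X) + a^(2*p-2) * (Real.exp (-t/X) - Real.exp (-a/X))) := by ring
            rw [e2, abs_neg]
            exact abs_add_le _ _
      _ ≤ ((2*p-2) * 2^(2*p-2) * a^(2*p-3)) * Real.exp (-a/X) + a^(2*p-2) * (Real.exp (-a/X) / X) := by
            have b1 : |(t^(2*p-2) - a^(2*p-2)) * Real.exp (-t/X)| ≤ ((2*p-2) * 2^(2*p-2) * a^(2*p-3)) * Real.exp (-a/X) := by
              rw [abs_mul, abs_of_nonneg hq0', abs_of_nonneg (hEpos t).le]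
              apply mul_le_mul hqsub hEa (hEpos t).le
              exact mul_nonneg (mul_nonneg (by linarith) (Real.rpow_nonneg (by norm_num) _))
                (Real.rpow_nonneg ha0.le _)
            have b2 : |a^(2*p-2) * (Real.exp (-t/X) - Real.exp (-a/X))| ≤ a^(2*p-2) * (Real.exp (-a/X) / X) := by
              rw [abs_mul, abs_of_nonneg (Real.rpow_nonneg ha0.le _)]
              exact mul_le_mul_of_nonneg_left hEd (Real.rpow_nonneg ha0.le _)
            linarith
      _ = (((2*p-2) * 2^(2*p-2) * a^(2*p-3)) + a^(2*p-2)/X) * Real.exp (-a/X) := by ring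
    -- assembly
    have hconst : (∫ _ in Ico a (a+1), p^2/3 * (a^(p-1)*a^(p-1) * Real.exp (-a/X)))
        = p^2/3 * (a^(p-1)*a^(p-1) * Real.exp (-a/X)) := by
      rw [MeasureTheory.setIntegral_const, measureReal_def, LFT_vol_Ico, one_smul]
    have key1 : |(∫ t in Ico a (a+1), (a ^ p - t ^ p) ^ 2 * Real.exp (-t/X))
        - (∫ t in Ico a (a+1), c2 * (t-a)^2)|
        ≤ ((p*p*2^p*a^(p-2)) * (p*2^p*a^(p-1) + p*a^(p-1)) + (p*a^(p-1))^2/X) * Real.exp (-a/X) := by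
      rw [← MeasureTheory.integral_sub hint1 hint2]
      exact LFT_abs_setIntegral_le hpt1
    have key2 : |(∫ t in Ico a (a+1), c2 * (t-a)^2)
        - p^2/3 * (∫ t in Ico a (a+1), t ^ (2*p-2) * Real.exp (-t/X))|
        ≤ p^2/3 * (((2*p-2) * 2^(2*p-2) * a^(2*p-3)) + a^(2*p-2)/X) * Real.exp (-a/X) := by
      rw [hg2val, ← MeasureTheory.integral_const_mul (p^2/3), ← hconst,
        ← MeasureTheory.integral_sub hint4 hint3]
      exact LFT_abs_setIntegral_le (fun t ht => by
        have := hpt2 t ht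
        calc |p^2/3 * (a^(p-1)*a^(p-1) * Real.exp (-a/X)) - p^2/3 * (t ^ (2*p-2) * Real.exp (-t/X))|
            ≤ p^2/3 * (((2*p-2) * 2^(2*p-2) * a^(2*p-3)) + a^(2*p-2)/X) * Real.exp (-a/X) := this)
    -- rpow algebra
    have e1 : a^(p-2) * a^(p-1) = a^(2*p-3) := by
      rw [← Real.rpow_add ha0]; congr 1; ring
    have e2 : a^(p-1) * a^(p-1) = a^(2*p-2) := by
      rw [← Real.rpow_add ha0]; congr 1; ring
    have e3 : (2:ℝ)^p * (2:ℝ)^p = 2^(2*p) := by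
      rw [← Real.rpow_add two_pos]; congr 1; ring
    have e4 : (2:ℝ)^p ≤ 2^(2*p) :=
      Real.rpow_le_rpow_of_exponent_le one_le_two (by linarith)
    have e5 : (2:ℝ)^(2*p-2) ≤ 2^(2*p) :=
      Real.rpow_le_rpow_of_exponent_le one_le_two (by linarith)
    have e6 : (2:ℝ)^(2*p+2) = 4 * 2^(2*p) := by
      rw [Real.rpow_add two_pos]
      rw [show (2:ℝ) = ((2:ℕ):ℝ) by norm_num, Real.rpow_natCast]
      norm_num; ring
    set W : ℝ := (2:ℝ)^(2*p) with hW_def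
    set A1 : ℝ := a^(2*p-3) with hA1_def
    set A2 : ℝ := a^(2*p-2) with hA2_def
    have hW0 : 0 ≤ W := Real.rpow_nonneg (by norm_num) _
    have hA10 : 0 ≤ A1 := Real.rpow_nonneg ha0.le _
    have hA20 : 0 ≤ A2 := Real.rpow_nonneg ha0.le _
    have hE0 : 0 ≤ Real.exp (-a/X) := (hEpos a).le
    have hp3 : 0 ≤ p^3 := by positivity
    have hp2 : 0 ≤ p^2 := sq_nonneg p
    have hB1 : A1 ≤ (a+1)^(2*p-3) :=
      Real.rpow_le_rpow ha0.le (by linarith) (by linarith)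
    have hB2 : A2 ≤ (a+1)^(2*p-2) :=
      Real.rpow_le_rpow ha0.le (by linarith) (by linarith)
    have hexpand : (p*p*2^p*a^(p-2)) * (p*2^p*a^(p-1) + p*a^(p-1)) + (p*a^(p-1))^2/X
        = (p^3*((2:ℝ)^p*(2:ℝ)^p) + p^3*(2:ℝ)^p)*(a^(p-2)*a^(p-1)) + p^2*(a^(p-1)*a^(p-1))/X := by
      ring
    rw [e1, e2, e3] at hexpand
    have h2pW : 0 ≤ (2:ℝ)^p := Real.rpow_nonneg (by norm_num) _
    -- coefficient bounds
    have hc1 : p^3*W + p^3*(2:ℝ)^p + p^2/3*((2*p-2) * 2^(2*p-2)) ≤ 3*(p^3*W) := by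
      have i1 : p^3*(2:ℝ)^p ≤ p^3*W := mul_le_mul_of_nonneg_left e4 hp3
      have i2 : p^2/3*((2*p-2) * 2^(2*p-2)) ≤ p^3*W := by
        have j1 : p^2/3*(2*p-2) ≤ p^3 := by nlinarith
        have j2 : (0:ℝ) ≤ p^2/3*(2*p-2) := by nlinarith
        calc p^2/3*((2*p-2) * 2^(2*p-2)) = (p^2/3*(2*p-2)) * 2^(2*p-2) := by ring
        _ ≤ p^3 * W := mul_le_mul j1 e5 (Real.rpow_nonneg (by norm_num) _) hp3
      linarith
    set CC : ℝ := p^3 * 2^(2*p+2) + 2*p^2 + 2 with hCC_def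
    clear_value W A1 A2 CC
    have hCCW : CC = 4*(p^3*W) + 2*p^2 + 2 := by rw [hCC_def, e6]; ring
    have hCC0 : 0 ≤ CC := by nlinarith [mul_nonneg hp3 hW0]
    have hA2X0 : 0 ≤ A2/X := div_nonneg hA20 hX0.le
    -- total bound
    have total : ((p^3*W + p^3*(2:ℝ)^p)*A1 + p^2*A2/X)
        + p^2/3 * (((2*p-2) * 2^(2*p-2) * A1) + A2/X)
        ≤ CC*A1 + CC*(A2/X) := by
      have t1 : (p^3*W + p^3*(2:ℝ)^p + p^2/3*((2*p-2) * 2^(2*p-2))) * A1 ≤ CC * A1 := by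
        apply mul_le_mul_of_nonneg_right ?_ hA10
        rw [hCCW]
        linarith [hc1, mul_nonneg hp3 hW0, hp2]
      have t2 : (p^2 + p^2/3) * (A2/X) ≤ CC * (A2/X) := by
        apply mul_le_mul_of_nonneg_right ?_ hA2X0
        rw [hCCW]
        linarith [mul_nonneg hp3 hW0, hp2]
      have expand2 : ((p^3*W + p^3*(2:ℝ)^p)*A1 + p^2*A2/X)
          + p^2/3 * (((2*p-2) * 2^(2*p-2) * A1) + A2/X)
          = (p^3*W + p^3*(2:ℝ)^p + p^2/3*((2*p-2) * 2^(2*p-2))) * A1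
            + (p^2 + p^2/3) * (A2/X) := by ring
      rw [expand2]
      linarith
    -- conclude
    calc |(∫ t in Ico a (a+1), (a ^ p - t ^ p) ^ 2 * Real.exp (-t/X))
        - p^2/3 * (∫ t in Ico a (a+1), t ^ (2*p-2) * Real.exp (-t/X))|
        ≤ |(∫ t in Ico a (a+1), (a ^ p - t ^ p) ^ 2 * Real.exp (-t/X))
            - (∫ t in Ico a (a+1), c2 * (t-a)^2)|
          + |(∫ t in Ico a (a+1), c2 * (t-a)^2)
            - p^2/3 * (∫ t in Ico a (a+1), t ^ (2*p-2) * Real.exp (-t/X))| := abs_sub_le _ _ _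
    _ ≤ ((p*p*2^p*a^(p-2)) * (p*2^p*a^(p-1) + p*a^(p-1)) + (p*a^(p-1))^2/X) * Real.exp (-a/X)
          + p^2/3 * (((2*p-2) * 2^(2*p-2) * A1) + A2/X) * Real.exp (-a/X) := by
        linarith
    _ = (((p^3*W + p^3*(2:ℝ)^p)*A1 + p^2*A2/X)
          + p^2/3 * (((2*p-2) * 2^(2*p-2) * A1) + A2/X)) * Real.exp (-a/X) := by
        rw [hexpand]; ring
    _ ≤ (CC*A1 + CC*(A2/X)) * Real.exp (-a/X) := mul_le_mul_of_nonneg_right total hE0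
    _ ≤ (CC*((a+1)^(2*p-3)) + CC*((a+1)^(2*p-2)/X)) * Real.exp (-a/X) := by
        have u1 : CC*A1 ≤ CC*((a+1)^(2*p-3)) := mul_le_mul_of_nonneg_left hB1 hCC0
        have u2 : CC*(A2/X) ≤ CC*((a+1)^(2*p-2)/X) :=
          mul_le_mul_of_nonneg_left (div_le_div_of_nonneg_right hB2 hX0.le) hCC0
        apply mul_le_mul_of_nonneg_right ?_ hE0
        linarith
    _ = CC * ((a+1) ^ (2*p-3) * Real.exp (-a/X) + (a+1) ^ (2*p-2) * Real.exp (-a/X) / X) := by ring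

lemma LFT_summable_geom_shift (m : ℕ) {r : ℝ} (h0 : 0 < r) (h1 : r < 1) :
    Summable (fun n : ℕ => ((n:ℝ)+1)^m * r^n) := by
  have hs : Summable (fun n : ℕ => (n:ℝ)^m * r^n) :=
    summable_pow_mul_geometric_of_norm_lt_one m
      (by rwa [Real.norm_eq_abs, abs_of_pos h0])
  have hs1 : Summable (fun n : ℕ => ((n+1:ℕ):ℝ)^m * r^(n+1)) :=
    (summable_nat_add_iff 1).mpr hs
  have he : (fun n : ℕ => ((n:ℝ)+1)^m * r^n)
      = fun n : ℕ => r⁻¹ * (((n+1:ℕ):ℝ)^m * r^(n+1)) := by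
    funext n
    push_cast
    rw [pow_succ]
    field_simp
  rw [he]
  exact hs1.mul_left _

lemma LFT_exp_eq_pow {c : ℝ} (n : ℕ) : Real.exp (-(n:ℝ) * c) = (Real.exp (-c))^n := by
  rw [← Real.exp_nat_mul]; congr 1; ring

lemma LFT_summable_exp (m : ℕ) {X : ℝ} (hX : 0 < X) :
    Summable (fun n : ℕ => ((n:ℝ)+1)^m * Real.exp (-(n:ℝ)/X)) := by
  have he : (fun n : ℕ => ((n:ℝ)+1)^m * Real.exp (-(n:ℝ)/X))
      = fun n : ℕ => ((n:ℝ)+1)^m * (Real.exp (-(1/X)))^n := by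
    funext n
    rw [← LFT_exp_eq_pow]
    congr 2
    ring
  rw [he]
  refine LFT_summable_geom_shift m (Real.exp_pos _) ?_
  rw [Real.exp_lt_one_iff]
  have : (0:ℝ) < 1/X := by positivity
  linarith

lemma LFT_sum_bound (m : ℕ) {X : ℝ} (hX : 2 ≤ X) :
    ∑' n : ℕ, ((n:ℝ)+1)^m * Real.exp (-(n:ℝ)/X) ≤ 8 * m.factorial * (2*X)^m * X := by
  have hX0 : (0:ℝ) < X := by linarith
  set r : ℝ := Real.exp (-(1/(2*X))) with hr_def
  have hr0 : 0 < r := Real.exp_pos _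
  have hr1 : r < 1 := by
    rw [hr_def, Real.exp_lt_one_iff]
    have : (0:ℝ) < 1/(2*X) := by positivity
    linarith
  have hu1 : 1/(2*X) ≤ 1 := by
    rw [div_le_one (by linarith)]; linarith
  have hgap : 1/(2*X)/2 ≤ 1 - r := LFT_one_sub_exp_ge (by positivity) hu1
  have hfac : (0:ℝ) < m.factorial := by exact_mod_cast m.factorial_pos
  have h2X : (0:ℝ) < (2*X)^m := by positivity
  have key : ∀ n : ℕ, ((n:ℝ)+1)^m * Real.exp (-(n:ℝ)/X)
      ≤ (2 * m.factorial * (2*X)^m) * r^n := by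
    intro n
    set x : ℝ := ((n:ℝ)+1)/(2*X) with hx_def
    have hx0 : 0 ≤ x := by positivity
    have h1 : x^m ≤ m.factorial * Real.exp x := by
      have := Real.pow_div_factorial_le_exp x hx0 m
      rw [div_le_iff₀ hfac] at this
      linarith [this]
    have h2 : ((n:ℝ)+1)^m ≤ m.factorial * Real.exp x * (2*X)^m := by
      have hxe : ((n:ℝ)+1) = x * (2*X) := by rw [hx_def]; field_simp
      rw [hxe, mul_pow]
      exact mul_le_mul_of_nonneg_right h1 h2X.le
    have h3 : Real.exp x * Real.exp (-(n:ℝ)/X)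
        = Real.exp (1/(2*X)) * r^n := by
      have : r^n = Real.exp (-(n:ℝ) * (1/(2*X))) := (LFT_exp_eq_pow n).symm
      rw [this, ← Real.exp_add, ← Real.exp_add]
      congr 1
      rw [hx_def]; ring
    have h4 : Real.exp (1/(2*X)) ≤ 2 := by
      apply LFT_exp_le_two (by positivity)
      rw [div_le_div_iff₀ (by linarith) (by norm_num)]; linarith
    calc ((n:ℝ)+1)^m * Real.exp (-(n:ℝ)/X)
        ≤ (m.factorial * Real.exp x * (2*X)^m) * Real.exp (-(n:ℝ)/X) :=
          mul_le_mul_of_nonneg_right h2 (Real.exp_nonneg _)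
    _ = (m.factorial * (2*X)^m) * (Real.exp x * Real.exp (-(n:ℝ)/X)) := by ring
    _ = (m.factorial * (2*X)^m) * (Real.exp (1/(2*X)) * r^n) := by rw [h3]
    _ ≤ (m.factorial * (2*X)^m) * (2 * r^n) := by
        apply mul_le_mul_of_nonneg_left ?_ (by positivity)
        exact mul_le_mul_of_nonneg_right h4 (pow_nonneg hr0.le n)
    _ = (2 * m.factorial * (2*X)^m) * r^n := by ring
  have hgeom : Summable (fun n : ℕ => (2 * m.factorial * (2*X)^m) * r^n) :=
    (summable_geometric_of_lt_one hr0.le hr1).mul_left _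
  calc ∑' n : ℕ, ((n:ℝ)+1)^m * Real.exp (-(n:ℝ)/X)
      ≤ ∑' n : ℕ, (2 * m.factorial * (2*X)^m) * r^n :=
        Summable.tsum_le_tsum key (LFT_summable_exp m hX0) hgeom
  _ = (2 * m.factorial * (2*X)^m) * (1-r)⁻¹ := by
      rw [tsum_mul_left, tsum_geometric_of_lt_one hr0.le hr1]
  _ ≤ (2 * m.factorial * (2*X)^m) * (4*X) := by
      apply mul_le_mul_of_nonneg_left ?_ (by positivity)
      have h1r : 0 < 1 - r := by
        have : (0:ℝ) < 1/(2*X)/2 := by positivity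
        linarith
      rw [inv_le_comm₀ h1r (by linarith)]
      calc (4*X)⁻¹ = 1/(2*X)/2 := by field_simp; ring
      _ ≤ 1 - r := hgap
  _ = 8 * m.factorial * (2*X)^m * X := by ring

lemma LFT_iUnion_Ico : (⋃ n : ℕ, Ico ((n:ℝ)) ((n:ℝ)+1)) = Ici (0:ℝ) := by
  ext x
  simp only [mem_iUnion, mem_Ico, mem_Ici]
  constructor
  · rintro ⟨n, h1, _⟩
    exact le_trans (Nat.cast_nonneg n) h1
  · intro hx
    exact ⟨⌊x⌋₊, Nat.floor_le hx, Nat.lt_floor_add_one x⟩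

lemma LFT_pairwise : Pairwise (Function.onFun Disjoint (fun n : ℕ => Ico ((n:ℝ)) ((n:ℝ)+1))) := by
  intro i j hij
  simp only [Function.onFun]
  apply Set.disjoint_left.mpr
  rintro x ⟨h1, h2⟩ ⟨h3, h4⟩
  apply hij
  have c1 : (i:ℝ) < (j:ℝ)+1 := lt_of_le_of_lt h1 h4
  have c2 : (j:ℝ) < (i:ℝ)+1 := lt_of_le_of_lt h3 h2
  have d1 : i < j + 1 := by exact_mod_cast c1
  have d2 : j < i + 1 := by exact_mod_cast c2
  omega

lemma LFT_hasSum_Ioi {f : ℝ → ℝ} (hf : IntegrableOn f (Ioi (0:ℝ))) :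
    HasSum (fun n : ℕ => ∫ t in Ico ((n:ℝ)) ((n:ℝ)+1), f t) (∫ t in Ioi (0:ℝ), f t) := by
  rw [← MeasureTheory.integral_Ici_eq_integral_Ioi]
  have hf' : IntegrableOn f (Ici (0:ℝ)) := by
    rwa [integrableOn_Ici_iff_integrableOn_Ioi]
  rw [← LFT_iUnion_Ico] at hf' ⊢
  exact MeasureTheory.hasSum_integral_iUnion (fun n => measurableSet_Ico) LFT_pairwise hf'

lemma LFT_gamma_value {q X : ℝ} (hq : 0 < q) (hX : 0 < X) :
    ∫ t in Ioi (0:ℝ), t ^ (q-1) * Real.exp (-t/X) = Real.Gamma q * X ^ q := by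
  have h := Real.integral_rpow_mul_exp_neg_mul_Ioi hq (r := 1/X) (by positivity)
  rw [one_div_one_div] at h
  have e : (fun t : ℝ => t ^ (q-1) * Real.exp (-t/X))
      = (fun t : ℝ => t ^ (q-1) * Real.exp (-(1/X*t))) := by
    funext t; congr 2; field_simp
  rw [e, h, mul_comm]

lemma LFT_integrable_mixed {q X : ℝ} (hq : 0 < q) (hX : 0 < X) :
    IntegrableOn (fun t : ℝ => t ^ (q-1) * Real.exp (-t/X)) (Ioi (0:ℝ)) := by
  have h := integrableOn_rpow_mul_exp_neg_mul_rpow (s := q-1) (p := 1) (b := 1/X)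
    (by linarith) zero_lt_one (by positivity)
  refine h.congr_fun (fun x hx => ?_) measurableSet_Ioi
  simp only [Real.rpow_one]
  congr 2
  field_simp

lemma LFT_main_est (m : ℕ) {p X : ℝ} (hpm : 2*p - 3 = (m:ℝ)) (hX : 2 ≤ X) :
    |(∫ t in Ioi (0:ℝ), (((⌊t⌋ : ℤ):ℝ) ^ p - t ^ p) ^ 2 * Real.exp (-t/X))
      - p^2/3 * (Real.Gamma (2*p-1) * X ^ (2*p-1))|
    ≤ (p^3 * 2^(2*p+2) + 2*p^2 + 2) *
      ((8 * m.factorial * (2*X)^m * X) + (8 * (m+1).factorial * (2*X)^(m+1) * X)/X) := by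
  have hX0 : (0:ℝ) < X := by linarith
  have hm0 : (0:ℝ) ≤ (m:ℝ) := Nat.cast_nonneg m
  have hp : 3/2 ≤ p := by linarith
  have hp0 : (0:ℝ) < p := by linarith
  -- integrability of the main integrand
  have hmaj : IntegrableOn (fun t : ℝ => t ^ (2*p) * Real.exp (-t/X)) (Ioi (0:ℝ)) := by
    have h := LFT_integrable_mixed (q := 2*p+1) (by linarith) hX0
    have e : 2*p+1-1 = 2*p := by ring
    rwa [e] at h
  have hF : IntegrableOn
      (fun t : ℝ => (((⌊t⌋ : ℤ):ℝ) ^ p - t ^ p) ^ 2 * Real.exp (-t/X)) (Ioi (0:ℝ)) := by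
    apply MeasureTheory.Integrable.mono' hmaj
    · have m0 : Measurable fun t : ℝ => ((⌊t⌋ : ℤ):ℝ) :=
        (continuous_of_discreteTopology : Continuous (Int.cast : ℤ → ℝ)).measurable.comp
          Int.measurable_floor
      have m1 : Measurable fun t : ℝ => ((⌊t⌋ : ℤ):ℝ) ^ p :=
        (Real.continuous_rpow_const hp0.le).measurable.comp m0
      have m2 : Measurable fun t : ℝ => t ^ p :=
        (Real.continuous_rpow_const hp0.le).measurable
      exact (((m1.sub m2).pow_const 2).mul
        (Real.continuous_exp.comp ((continuous_id.neg).div_const X)).measurable).aestronglyMeasurable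
    · rw [MeasureTheory.ae_restrict_iff' measurableSet_Ioi]
      refine MeasureTheory.ae_of_all _ (fun t ht => ?_)
      have ht0 : (0:ℝ) < t := ht
      have hb0 : (0:ℝ) ≤ ((⌊t⌋ : ℤ):ℝ) := by
        exact_mod_cast Int.floor_nonneg.mpr ht0.le
      have hbt : ((⌊t⌋ : ℤ):ℝ) ≤ t := Int.floor_le t
      have hbp : ((⌊t⌋ : ℤ):ℝ) ^ p ≤ t ^ p := Real.rpow_le_rpow hb0 hbt hp0.le
      have hbp0 : 0 ≤ ((⌊t⌋ : ℤ):ℝ) ^ p := Real.rpow_nonneg hb0 _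
      have htp0 : 0 ≤ t ^ p := Real.rpow_nonneg ht0.le _
      have hsq : (((⌊t⌋ : ℤ):ℝ) ^ p - t ^ p) ^ 2 ≤ (t ^ p) * (t ^ p) := by nlinarith
      have htt : t ^ p * t ^ p = t ^ (2*p) := by
        rw [← Real.rpow_add ht0]; congr 1; ring
      rw [Real.norm_eq_abs, abs_mul, abs_of_nonneg (sq_nonneg _),
        abs_of_nonneg (Real.exp_nonneg _)]
      rw [← htt]
      exact mul_le_mul_of_nonneg_right hsq (Real.exp_nonneg _)
  -- integrability of the comparison integrand
  have hG : IntegrableOn (fun t : ℝ => t ^ (2*p-2) * Real.exp (-t/X)) (Ioi (0:ℝ)) := by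
    have h := LFT_integrable_mixed (q := 2*p-1) (by linarith) hX0
    have e : 2*p-1-1 = 2*p-2 := by ring
    rwa [e] at h
  have hGval : ∫ t in Ioi (0:ℝ), t ^ (2*p-2) * Real.exp (-t/X)
      = Real.Gamma (2*p-1) * X ^ (2*p-1) := by
    have h := LFT_gamma_value (q := 2*p-1) (by linarith) hX0
    have e : 2*p-1-1 = 2*p-2 := by ring
    rwa [e] at h
  -- interval decomposition
  have hs1 := LFT_hasSum_Ioi hF
  have hs2 := LFT_hasSum_Ioi hG
  have hcong : ∀ n : ℕ, (∫ t in Ico ((n:ℝ)) ((n:ℝ)+1),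
        (((⌊t⌋ : ℤ):ℝ) ^ p - t ^ p) ^ 2 * Real.exp (-t/X))
      = ∫ t in Ico ((n:ℝ)) ((n:ℝ)+1), ((n:ℝ) ^ p - t ^ p) ^ 2 * Real.exp (-t/X) := by
    intro n
    apply MeasureTheory.setIntegral_congr_fun measurableSet_Ico
    intro t ht
    show (((⌊t⌋ : ℤ):ℝ) ^ p - t ^ p) ^ 2 * Real.exp (-t/X)
      = (((n:ℕ):ℝ) ^ p - t ^ p) ^ 2 * Real.exp (-t/X)
    have hfl : ⌊t⌋ = (n:ℤ) := by
      rw [Int.floor_eq_iff]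
      constructor
      · exact_mod_cast ht.1
      · push_cast; exact ht.2
    rw [hfl]
    norm_num
  have hs1' : HasSum (fun n : ℕ => ∫ t in Ico ((n:ℝ)) ((n:ℝ)+1),
      ((n:ℝ) ^ p - t ^ p) ^ 2 * Real.exp (-t/X))
      (∫ t in Ioi (0:ℝ), (((⌊t⌋ : ℤ):ℝ) ^ p - t ^ p) ^ 2 * Real.exp (-t/X)) := by
    have e := funext hcong
    rwa [e] at hs1
  have hs2' : HasSum (fun n : ℕ => p^2/3 * ∫ t in Ico ((n:ℝ)) ((n:ℝ)+1),
      t ^ (2*p-2) * Real.exp (-t/X))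
      (p^2/3 * (Real.Gamma (2*p-1) * X ^ (2*p-1))) := by
    rw [← hGval]
    exact hs2.mul_left _
  have hdiff := hs1'.sub hs2'
  have htsum : (∫ t in Ioi (0:ℝ), (((⌊t⌋ : ℤ):ℝ) ^ p - t ^ p) ^ 2 * Real.exp (-t/X))
      - p^2/3 * (Real.Gamma (2*p-1) * X ^ (2*p-1))
      = ∑' n : ℕ, ((∫ t in Ico ((n:ℝ)) ((n:ℝ)+1), ((n:ℝ) ^ p - t ^ p) ^ 2 * Real.exp (-t/X))
        - p^2/3 * ∫ t in Ico ((n:ℝ)) ((n:ℝ)+1), t ^ (2*p-2) * Real.exp (-t/X)) :=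
    hdiff.tsum_eq.symm
  -- error function and its sum
  have hm1 : 2*p - 2 = ((m:ℝ)+1) := by linarith
  have e7 : ∀ n : ℕ, ((n:ℝ)+1) ^ (2*p-3) = ((n:ℝ)+1)^m := by
    intro n; rw [hpm, Real.rpow_natCast]
  have e8 : ∀ n : ℕ, ((n:ℝ)+1) ^ (2*p-2) = ((n:ℝ)+1)^(m+1) := by
    intro n
    rw [hm1, show ((m:ℝ)+1) = ((m+1:ℕ):ℝ) by push_cast; ring, Real.rpow_natCast]
  set CC : ℝ := p^3 * 2^(2*p+2) + 2*p^2 + 2 with hCC_def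
  have hCC0 : 0 ≤ CC := by
    have h1 : 0 ≤ p^3 := by positivity
    have h2 : (0:ℝ) ≤ 2^(2*p+2) := Real.rpow_nonneg (by norm_num) _
    nlinarith [mul_nonneg h1 h2, sq_nonneg p]
  have herr : ∀ n : ℕ, |(∫ t in Ico ((n:ℝ)) ((n:ℝ)+1), ((n:ℝ) ^ p - t ^ p) ^ 2 * Real.exp (-t/X))
        - p^2/3 * ∫ t in Ico ((n:ℝ)) ((n:ℝ)+1), t ^ (2*p-2) * Real.exp (-t/X)|
      ≤ CC * (((n:ℝ)+1)^m * Real.exp (-(n:ℝ)/X)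
          + (((n:ℝ)+1)^(m+1) * Real.exp (-(n:ℝ)/X))/X) := by
    intro n
    have h := LFT_interval_est hp hX n
    rw [e7 n, e8 n] at h
    calc _ ≤ _ := h
    _ = CC * (((n:ℝ)+1)^m * Real.exp (-(n:ℝ)/X)
          + (((n:ℝ)+1)^(m+1) * Real.exp (-(n:ℝ)/X))/X) := by rw [hCC_def]
  have hsum1 : Summable (fun n : ℕ => ((n:ℝ)+1)^m * Real.exp (-(n:ℝ)/X)) :=
    LFT_summable_exp m hX0
  have hsum2 : Summable (fun n : ℕ => ((n:ℝ)+1)^(m+1) * Real.exp (-(n:ℝ)/X)) :=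
    LFT_summable_exp (m+1) hX0
  have hsum_err : Summable (fun n : ℕ => CC * (((n:ℝ)+1)^m * Real.exp (-(n:ℝ)/X)
      + (((n:ℝ)+1)^(m+1) * Real.exp (-(n:ℝ)/X))/X)) :=
    ((hsum1.add (hsum2.div_const X)).mul_left CC)
  have habs : Summable (fun n : ℕ => |(∫ t in Ico ((n:ℝ)) ((n:ℝ)+1),
        ((n:ℝ) ^ p - t ^ p) ^ 2 * Real.exp (-t/X))
      - p^2/3 * ∫ t in Ico ((n:ℝ)) ((n:ℝ)+1), t ^ (2*p-2) * Real.exp (-t/X)|) :=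
    Summable.of_nonneg_of_le (fun n => abs_nonneg _) herr hsum_err
  rw [htsum]
  calc |∑' n : ℕ, ((∫ t in Ico ((n:ℝ)) ((n:ℝ)+1), ((n:ℝ) ^ p - t ^ p) ^ 2 * Real.exp (-t/X))
        - p^2/3 * ∫ t in Ico ((n:ℝ)) ((n:ℝ)+1), t ^ (2*p-2) * Real.exp (-t/X))|
      ≤ ∑' n : ℕ, |(∫ t in Ico ((n:ℝ)) ((n:ℝ)+1), ((n:ℝ) ^ p - t ^ p) ^ 2 * Real.exp (-t/X))
        - p^2/3 * ∫ t in Ico ((n:ℝ)) ((n:ℝ)+1), t ^ (2*p-2) * Real.exp (-t/X)| := by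
        have := norm_tsum_le_tsum_norm (f := fun n : ℕ =>
          (∫ t in Ico ((n:ℝ)) ((n:ℝ)+1), ((n:ℝ) ^ p - t ^ p) ^ 2 * Real.exp (-t/X))
          - p^2/3 * ∫ t in Ico ((n:ℝ)) ((n:ℝ)+1), t ^ (2*p-2) * Real.exp (-t/X)) ?_
        · simpa [Real.norm_eq_abs] using this
        · simpa [Real.norm_eq_abs] using habs
  _ ≤ ∑' n : ℕ, CC * (((n:ℝ)+1)^m * Real.exp (-(n:ℝ)/X)
        + (((n:ℝ)+1)^(m+1) * Real.exp (-(n:ℝ)/X))/X) :=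
      Summable.tsum_le_tsum herr habs hsum_err
  _ = CC * ((∑' n : ℕ, ((n:ℝ)+1)^m * Real.exp (-(n:ℝ)/X))
        + (∑' n : ℕ, ((n:ℝ)+1)^(m+1) * Real.exp (-(n:ℝ)/X))/X) := by
      rw [tsum_mul_left]
      congr 1
      rw [Summable.tsum_add hsum1 (hsum2.div_const X), tsum_div_const]
  _ ≤ CC * ((8 * m.factorial * (2*X)^m * X) + (8 * (m+1).factorial * (2*X)^(m+1) * X)/X) := by
      apply mul_le_mul_of_nonneg_left ?_ hCC0
      have s1 := LFT_sum_bound m hX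
      have s2 := LFT_sum_bound (m+1) hX
      exact add_le_add s1 (div_le_div_of_nonneg_right s2 hX0.le)
  _ = _ := by rw [hCC_def]


/-- Laplace transform of the squared sawtooth-type term. -/
theorem laplace_floor_term (k : ℕ) (hk : 3 ≤ k) :
    ∀ ε : ℝ, 0 < ε → ∃ A : ℝ, 0 < A ∧ ∀ X : ℝ, 2 ≤ X →
      |Vk k ^ 2 * (∫ t in Set.Ioi (0 : ℝ),
            (((⌊t⌋ : ℝ)) ^ ((k : ℝ) / 2) - t ^ ((k : ℝ) / 2)) ^ 2 * Real.exp (-t / X))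
          - ((k : ℝ) ^ 2 * Vk k ^ 2 * Real.Gamma ((k : ℝ) - 1) / 12) * X ^ ((k : ℝ) - 1)|
        ≤ A * X ^ ((k : ℝ) - 2 + ε) := by
  intro ε hε
  obtain ⟨m, rfl⟩ : ∃ m, k = m + 3 := ⟨k - 3, by omega⟩
  set p : ℝ := ((m+3:ℕ):ℝ)/2 with hp_def
  have hpm : 2*p - 3 = (m:ℝ) := by rw [hp_def]; push_cast; ring
  have hp0 : 0 < p := by
    rw [hp_def]; positivity
  set B : ℝ := (p^3 * 2^(2*p+2) + 2*p^2 + 2)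
      * (8 * (m.factorial:ℝ) * 2^m + 8 * ((m+1).factorial:ℝ) * 2^(m+1)) with hB_def
  have hCC0 : (0:ℝ) ≤ p^3 * 2^(2*p+2) + 2*p^2 + 2 := by
    have h1 : (0:ℝ) ≤ p^3 := by positivity
    have h2 : (0:ℝ) ≤ 2^(2*p+2) := Real.rpow_nonneg (by norm_num) _
    nlinarith [mul_nonneg h1 h2, sq_nonneg p]
  have hB0 : 0 ≤ B := mul_nonneg hCC0 (by positivity)
  have hVB : 0 ≤ Vk (m+3) ^ 2 * B := mul_nonneg (sq_nonneg _) hB0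
  refine ⟨Vk (m+3) ^ 2 * B + 1, by linarith, ?_⟩
  intro X hX
  have hX0 : (0:ℝ) < X := by linarith
  have h := LFT_main_est m hpm hX
  have e9 : 2*p - 1 = ((m+3:ℕ):ℝ) - 1 := by rw [hp_def]; push_cast; ring
  have hfactor : (((m+3:ℕ)):ℝ)^2 * Vk (m+3)^2 * Real.Gamma ((((m+3:ℕ)):ℝ)-1) / 12
        * X ^ ((((m+3:ℕ)):ℝ)-1)
      = Vk (m+3)^2 * (p^2/3 * (Real.Gamma (2*p-1) * X ^ (2*p-1))) := by
    rw [e9, hp_def]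
    push_cast
    ring
  have hXpow : (8 * (m.factorial:ℝ) * (2*X)^m * X) + (8 * ((m+1).factorial:ℝ) * (2*X)^(m+1) * X)/X
      = (8 * (m.factorial:ℝ) * 2^m + 8 * ((m+1).factorial:ℝ) * 2^(m+1)) * X^(m+1) := by
    rw [mul_pow, mul_pow]
    field_simp
    ring
  have hXr : (X:ℝ)^(m+1) ≤ X ^ ((((m+3:ℕ)):ℝ) - 2 + ε) := by
    have h1 : (X:ℝ)^(m+1) = X ^ (((m+1:ℕ)):ℝ) := (Real.rpow_natCast X (m+1)).symm
    rw [h1]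
    apply Real.rpow_le_rpow_of_exponent_le (by linarith)
    push_cast
    linarith
  have hXre : 0 ≤ X ^ ((((m+3:ℕ)):ℝ) - 2 + ε) := Real.rpow_nonneg hX0.le _
  calc |Vk (m+3) ^ 2 * (∫ t in Set.Ioi (0 : ℝ),
            (((⌊t⌋ : ℝ)) ^ p - t ^ p) ^ 2 * Real.exp (-t / X))
          - ((((m+3:ℕ)):ℝ) ^ 2 * Vk (m+3) ^ 2 * Real.Gamma ((((m+3:ℕ)):ℝ) - 1) / 12)
            * X ^ ((((m+3:ℕ)):ℝ) - 1)|
      = Vk (m+3)^2 * |(∫ t in Set.Ioi (0 : ℝ),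
            (((⌊t⌋ : ℝ)) ^ p - t ^ p) ^ 2 * Real.exp (-t / X))
          - p^2/3 * (Real.Gamma (2*p-1) * X ^ (2*p-1))| := by
        rw [hfactor, ← mul_sub, abs_mul, abs_of_nonneg (sq_nonneg _)]
  _ ≤ Vk (m+3)^2 * ((p^3 * 2^(2*p+2) + 2*p^2 + 2) *
      ((8 * (m.factorial:ℝ) * (2*X)^m * X) + (8 * ((m+1).factorial:ℝ) * (2*X)^(m+1) * X)/X)) :=
        mul_le_mul_of_nonneg_left h (sq_nonneg _)
  _ = (Vk (m+3)^2 * B) * X^(m+1) := by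
        rw [hXpow, hB_def]; ring
  _ ≤ (Vk (m+3)^2 * B) * X ^ ((((m+3:ℕ)):ℝ) - 2 + ε) :=
        mul_le_mul_of_nonneg_left hXr hVB
  _ ≤ (Vk (m+3) ^ 2 * B + 1) * X ^ ((((m+3:ℕ)):ℝ) - 2 + ε) := by
        apply mul_le_mul_of_nonneg_right ?_ hXre
        linarith
end

section
/- Let F : ℂ → ℂ be continuous and of polynomial growth on every vertical line, i.e. for each a ∈ ℝ there exist constants C_a, A_a > 0 with |F(a + it)| ≤ C_a (1 + |t|)^{A_a} for all t ∈ ℝ. Let c, τ, σ ∈ ℝ with σ > 1 and τ + c − σ > 0. Then there exist constants M > 0 and C > 0 such that for every s ∈ ℂ with Re s = τ, the integral (1/2π) ∫_{−∞}^{∞} F(s − σ − it) ζ(σ + it) Γ(σ + it) Γ(s + c − σ − it) / Γ(s + c) dt converges absolutely and its absolute value is at most C (1 + |Im s|)^M. -/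
open Complex MeasureTheory

lemma MB_gamma_shift (k : ℕ) (z : ℂ) (hz : 0 < z.re) :
    Complex.Gamma (z + k) = (∏ j ∈ Finset.range k, (z + j)) * Complex.Gamma z := by
  induction k with
  | zero => simp
  | succ n ih =>
    have h1 : z + ((n : ℕ) + 1 : ℕ) = (z + n) + 1 := by push_cast; ring
    have hne : z + (n : ℂ) ≠ 0 := by
      intro h
      have h2 : z.re + n = 0 := by simpa using congrArg Complex.re h
      have : (0:ℝ) ≤ (n:ℝ) := n.cast_nonneg
      linarith
    rw [h1, Complex.Gamma_add_one _ hne, ih, Finset.prod_range_succ]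
    ring

lemma MB_zeta_bound {σ : ℝ} (hσ : 1 < σ) (t : ℝ) :
    ‖riemannZeta ((σ:ℂ) + t * I)‖ ≤ ∑' n : ℕ, 1 / (n:ℝ) ^ σ := by
  have hre : 1 < ((σ:ℂ) + t * I).re := by simp [hσ]
  rw [zeta_eq_tsum_one_div_nat_cpow hre]
  have hnorm : ∀ n : ℕ, ‖1 / (n:ℂ) ^ ((σ:ℂ) + t * I)‖ = 1 / (n:ℝ) ^ σ := by
    intro n
    rcases Nat.eq_zero_or_pos n with h0 | hpos
    · subst h0
      simp only [Nat.cast_zero]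
      rw [Complex.zero_cpow (show ((σ:ℂ) + t*I) ≠ 0 by
        intro h; have := congrArg Complex.re h; simp at this; linarith),
        Real.zero_rpow (by linarith : σ ≠ 0)]
      simp
    · have : ((n:ℂ)) = ((n:ℝ):ℂ) := by norm_cast
      rw [this, norm_div, norm_one,
        Complex.norm_cpow_eq_rpow_re_of_pos (by exact_mod_cast hpos)]
      simp
  calc ‖∑' n : ℕ, 1 / (n:ℂ) ^ ((σ:ℂ) + t * I)‖
      ≤ ∑' n : ℕ, ‖1 / (n:ℂ) ^ ((σ:ℂ) + t * I)‖ := by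
        apply norm_tsum_le_tsum_norm
        simp_rw [hnorm]
        exact Real.summable_one_div_nat_rpow.mpr hσ
    _ = ∑' n : ℕ, 1 / (n:ℝ) ^ σ := by simp_rw [hnorm]

lemma MB_beta_bound (u v : ℂ) :
    ‖Complex.betaIntegral u v‖ ≤ ∫ x in (0:ℝ)..1, x ^ (u.re - 1) * (1-x) ^ (v.re - 1) := by
  rw [Complex.betaIntegral]
  refine (intervalIntegral.norm_integral_le_integral_norm (by norm_num)).trans_eq ?_
  apply intervalIntegral.integral_congr_ae
  have h1 : ∀ᵐ x : ℝ, x ≠ 1 := by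
    refine ae_iff.mpr ?_
    rw [show {a : ℝ | ¬ a ≠ 1} = {1} by ext x; simp]
    exact measure_singleton 1
  filter_upwards [h1] with x hx hxI
  rw [Set.uIoc_of_le (by norm_num : (0:ℝ) ≤ 1)] at hxI
  have hx0 : 0 < x := hxI.1
  have hx1 : 0 < 1 - x := lt_of_le_of_ne (by linarith [hxI.2]) (fun h => hx (by linarith))
  rw [norm_mul,
    Complex.norm_cpow_eq_rpow_re_of_pos hx0,
    show (1 - (x:ℂ)) = ((1 - x : ℝ) : ℂ) by push_cast; ring,
    Complex.norm_cpow_eq_rpow_re_of_pos hx1]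
  simp

set_option maxHeartbeats 2000000 in
/-- polynomial growth of the Mellin–Barnes-type integral
`(1/2πi)∫_{(σ)} F(s − z) ζ(z) Γ(z) Γ(s + c − z)/Γ(s + c) dz` on the vertical line
`Re s = τ`, given that `F` is continuous and of polynomial growth on vertical lines. -/
theorem mellin_barnes_polynomial_growth (F : ℂ → ℂ) (hF : Continuous F)
    (hFpoly : ∀ a : ℝ, ∃ C : ℝ, 0 < C ∧ ∃ A : ℝ, 0 < A ∧
      ∀ t : ℝ, ‖F ((a : ℂ) + t * Complex.I)‖ ≤ C * (1 + |t|) ^ A)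
    (c τ σ : ℝ) (hσ : 1 < σ) (hτ : 0 < τ + c - σ) :
    ∃ M : ℝ, 0 < M ∧ ∃ C : ℝ, 0 < C ∧ ∀ s : ℂ, s.re = τ →
      Integrable (fun t : ℝ =>
        F (s - (σ : ℂ) - t * Complex.I) * riemannZeta ((σ : ℂ) + t * Complex.I)
          * Complex.Gamma ((σ : ℂ) + t * Complex.I)
          * Complex.Gamma (s + (c : ℂ) - (σ : ℂ) - t * Complex.I)
          / Complex.Gamma (s + (c : ℂ))) ∧
      ‖(1 / (2 * (Real.pi : ℂ))) * ∫ t : ℝ,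
          F (s - (σ : ℂ) - t * Complex.I) * riemannZeta ((σ : ℂ) + t * Complex.I)
            * Complex.Gamma ((σ : ℂ) + t * Complex.I)
            * Complex.Gamma (s + (c : ℂ) - (σ : ℂ) - t * Complex.I)
            / Complex.Gamma (s + (c : ℂ))‖
        ≤ C * (1 + |s.im|) ^ M := by
  obtain ⟨C₁, hC₁, A, hA, hFb⟩ := hFpoly (τ - σ)
  -- zeta bound constant
  obtain ⟨Z, hZ0, hZb⟩ : ∃ Z : ℝ, 0 ≤ Z ∧
      ∀ t : ℝ, ‖riemannZeta ((σ:ℂ) + t * I)‖ ≤ Z :=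
    ⟨∑' n : ℕ, 1 / (n:ℝ) ^ σ, tsum_nonneg fun n => by positivity, MB_zeta_bound hσ⟩
  -- shift
  obtain ⟨k, hkA⟩ : ∃ k : ℕ, A + 2 ≤ (k:ℝ) := by
    refine ⟨⌈A⌉₊ + 2, ?_⟩
    have := Nat.le_ceil A
    push_cast
    linarith
  have hk0 : (0:ℝ) < k := by linarith
  -- beta bound constant
  obtain ⟨Br, hBr0, hBrb⟩ : ∃ Br : ℝ, 0 ≤ Br ∧ ∀ u v : ℂ,
      u.re = σ + (k:ℝ) → v.re = τ + c - σ → ‖Complex.betaIntegral u v‖ ≤ Br := by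
    refine ⟨∫ x in (0:ℝ)..1, x ^ (σ + (k:ℝ) - 1) * (1-x) ^ ((τ + c - σ) - 1), ?_, ?_⟩
    · apply intervalIntegral.integral_nonneg (by norm_num)
      intro u hu
      exact mul_nonneg (Real.rpow_nonneg hu.1 _)
        (Real.rpow_nonneg (by linarith [hu.2]) _)
    · intro u v hu hv
      have := MB_beta_bound u v
      rwa [hu, hv] at this
  -- bound for the numerator product
  obtain ⟨E, hE1, hEb⟩ : ∃ E : ℝ, 1 ≤ E ∧ ∀ j : ℕ, (j:ℝ) ≤ (k:ℝ) → ∀ y : ℝ,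
      |τ + c + (j:ℝ)| + |y| ≤ E * (1 + |y|) := by
    refine ⟨|τ| + |c| + k + 1, by have := abs_nonneg τ; have := abs_nonneg c; have : (0:ℝ) ≤ (k:ℕ) := Nat.cast_nonneg k; linarith, fun j hj y => ?_⟩
    have h1 : |τ + c + (j:ℝ)| ≤ |τ| + |c| + k := by
      calc |τ + c + (j:ℝ)| ≤ |τ + c| + |(j:ℝ)| := abs_add_le _ _
        _ ≤ |τ| + |c| + k := by
          rw [_root_.abs_of_nonneg (show (0:ℝ) ≤ (j:ℝ) from j.cast_nonneg)]
          have := abs_add_le τ c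
          linarith
    nlinarith [abs_nonneg y, abs_nonneg τ, abs_nonneg c]
  -- the integral of the dominating function
  obtain ⟨Iv, hIv0, hIvEq⟩ : ∃ Iv : ℝ, 0 ≤ Iv ∧ (∫ t : ℝ, (1 + t^2)⁻¹) = Iv :=
    ⟨_, integral_nonneg fun t => by positivity, rfl⟩
  set Kc : ℝ := C₁ * Z * E^k * Br * 2^k with hKcdef
  have hKc : 0 ≤ Kc := by positivity
  refine ⟨A + k, by positivity, Kc * Iv + 1, by positivity, fun s hs => ?_⟩
  have hbasy : (0:ℝ) < 1 + |s.im| := by positivity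
  set Ky : ℝ := Kc * ((1 + |s.im|) ^ A * (1 + |s.im|)^k) with hKydef
  have hKy : 0 ≤ Ky := by positivity
  have hτc : (0:ℝ) < τ + c := by linarith
  -- pointwise bound
  have hbnd : ∀ t : ℝ,
      ‖F (s - (σ : ℂ) - t * I) * riemannZeta ((σ : ℂ) + t * I)
        * Complex.Gamma ((σ : ℂ) + t * I) * Complex.Gamma (s + (c:ℂ) - (σ:ℂ) - t * I)
        / Complex.Gamma (s + (c:ℂ))‖ ≤ Ky * (1 + t^2)⁻¹ := by
    intro t
    have hbase : (0:ℝ) < 1 + |t| := by positivity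
    have ht2 : (0:ℝ) < 1 + t^2 := by positivity
    -- F bound
    have hFt : ‖F (s - (σ : ℂ) - t * I)‖ ≤ C₁ * ((1 + |s.im|) ^ A * (1 + |t|) ^ A) := by
      have harg : s - (σ : ℂ) - t * I = ((τ - σ : ℝ) : ℂ) + ((s.im - t : ℝ) : ℂ) * I := by
        apply Complex.ext <;> simp [hs]
      rw [harg]
      refine (hFb (s.im - t)).trans ?_
      rw [← Real.mul_rpow (le_of_lt hbasy) (le_of_lt hbase)]
      apply mul_le_mul_of_nonneg_left _ (le_of_lt hC₁)
      apply Real.rpow_le_rpow (by positivity) _ (le_of_lt hA)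
      have h1 : |s.im - t| ≤ |s.im| + |t| := abs_sub s.im t
      nlinarith [abs_nonneg s.im, abs_nonneg t]
    have hζ := hZb t
    -- Gamma quotient
    have hsc : (s + (c:ℂ)).re = τ + c := by simp [hs]
    have hzre : ((σ:ℂ) + t * I).re = σ := by simp
    have hwre : (s + (c:ℂ) - (σ:ℂ) - t * I).re = τ + c - σ := by simp [hs]
    have hG1 : Complex.Gamma (((σ:ℂ) + t * I) + k)
        = (∏ j ∈ Finset.range k, (((σ:ℂ) + t * I) + j)) * Complex.Gamma ((σ:ℂ) + t * I) :=
      MB_gamma_shift k _ (by rw [hzre]; linarith)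
    have hG2 : Complex.Gamma ((s + (c:ℂ)) + k)
        = (∏ j ∈ Finset.range k, ((s + (c:ℂ)) + j)) * Complex.Gamma (s + (c:ℂ)) :=
      MB_gamma_shift k _ (by rw [hsc]; linarith)
    have hBeq : Complex.Gamma (((σ:ℂ) + t * I) + k) * Complex.Gamma (s + (c:ℂ) - (σ:ℂ) - t * I)
        = Complex.Gamma ((((σ:ℂ) + t * I) + k) + (s + (c:ℂ) - (σ:ℂ) - t * I))
          * Complex.betaIntegral (((σ:ℂ) + t * I) + k) (s + (c:ℂ) - (σ:ℂ) - t * I) :=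
      Complex.Gamma_mul_Gamma_eq_betaIntegral
        (by rw [Complex.add_re, hzre, Complex.natCast_re]; positivity)
        (by rw [hwre]; exact hτ)
    have harg2 : (((σ:ℂ) + t * I) + k) + (s + (c:ℂ) - (σ:ℂ) - t * I) = (s + (c:ℂ)) + k := by
      ring
    have hPne : (∏ j ∈ Finset.range k, (((σ:ℂ) + t * I) + j)) ≠ 0 := by
      rw [Finset.prod_ne_zero_iff]
      intro j hj h
      have h2 : σ + j = 0 := by simpa using congrArg Complex.re h
      have : (0:ℝ) ≤ (j:ℝ) := j.cast_nonneg
      linarith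
    have hΓne : Complex.Gamma (s + (c:ℂ)) ≠ 0 := by
      apply Complex.Gamma_ne_zero
      intro m h
      have h2 : τ + c = -(m:ℝ) := by simpa [hsc] using congrArg Complex.re h
      have : (0:ℝ) ≤ (m:ℝ) := m.cast_nonneg
      linarith
    have keyq : Complex.Gamma ((σ:ℂ) + t * I) * Complex.Gamma (s + (c:ℂ) - (σ:ℂ) - t * I)
        / Complex.Gamma (s + (c:ℂ))
        = (∏ j ∈ Finset.range k, ((s + (c:ℂ)) + j))
          * Complex.betaIntegral (((σ:ℂ) + t * I) + k) (s + (c:ℂ) - (σ:ℂ) - t * I)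
          / (∏ j ∈ Finset.range k, (((σ:ℂ) + t * I) + j)) := by
      rw [div_eq_div_iff hΓne hPne]
      calc Complex.Gamma ((σ:ℂ) + t * I) * Complex.Gamma (s + (c:ℂ) - (σ:ℂ) - t * I)
            * (∏ j ∈ Finset.range k, (((σ:ℂ) + t * I) + j))
          = Complex.Gamma (((σ:ℂ) + t * I) + k)
              * Complex.Gamma (s + (c:ℂ) - (σ:ℂ) - t * I) := by rw [hG1]; ring
        _ = Complex.Gamma ((s + (c:ℂ)) + k)
              * Complex.betaIntegral (((σ:ℂ) + t * I) + k) (s + (c:ℂ) - (σ:ℂ) - t * I) := by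
            rw [hBeq, harg2]
        _ = _ := by rw [hG2]; ring
    -- norm bounds on the pieces
    have hQ : ‖∏ j ∈ Finset.range k, ((s + (c:ℂ)) + j)‖ ≤ (E * (1 + |s.im|))^k := by
      rw [norm_prod]
      calc ∏ j ∈ Finset.range k, ‖(s + (c:ℂ)) + (j:ℂ)‖
          ≤ ∏ _j ∈ Finset.range k, (E * (1 + |s.im|)) := by
            apply Finset.prod_le_prod (fun j _ => norm_nonneg _)
            intro j hj
            have hjk : (j:ℝ) ≤ (k:ℝ) := by
              exact_mod_cast le_of_lt (Finset.mem_range.mp hj)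
            refine (Complex.norm_le_abs_re_add_abs_im _).trans ?_
            have hre2 : ((s + (c:ℂ)) + (j:ℂ)).re = τ + c + j := by simp [hs]
            have him2 : ((s + (c:ℂ)) + (j:ℂ)).im = s.im := by simp
            rw [hre2, him2]
            exact hEb j hjk s.im
        _ = (E * (1 + |s.im|))^k := by rw [Finset.prod_const, Finset.card_range]
    have hPlb : ((1 + |t|)/2)^k ≤ ‖∏ j ∈ Finset.range k, (((σ:ℂ) + t * I) + j)‖ := by
      rw [norm_prod]
      calc ((1 + |t|)/2)^k = ∏ _j ∈ Finset.range k, ((1 + |t|)/2) := by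
            rw [Finset.prod_const, Finset.card_range]
        _ ≤ _ := by
            apply Finset.prod_le_prod (fun j _ => by positivity)
            intro j hj
            have hre2 : (((σ:ℂ) + t * I) + (j:ℂ)).re = σ + j := by simp
            have him2 : (((σ:ℂ) + t * I) + (j:ℂ)).im = t := by simp
            have h1 := Complex.abs_re_le_norm (((σ:ℂ) + t * I) + (j:ℂ))
            have h2 := Complex.abs_im_le_norm (((σ:ℂ) + t * I) + (j:ℂ))
            rw [hre2] at h1
            rw [him2] at h2
            have h3 : (0:ℝ) ≤ (j:ℝ) := j.cast_nonneg
            rw [_root_.abs_of_nonneg (by linarith : (0:ℝ) ≤ σ + (j:ℝ))] at h1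
            cases abs_cases t with
            | inl h => rw [h.1]; linarith
            | inr h => rw [h.1]; linarith
    have hBb : ‖Complex.betaIntegral (((σ:ℂ) + t * I) + k) (s + (c:ℂ) - (σ:ℂ) - t * I)‖
        ≤ Br := by
      apply hBrb
      · rw [Complex.add_re, hzre, Complex.natCast_re]
      · exact hwre
    -- assemble
    have hsplit : F (s - (σ : ℂ) - t * I) * riemannZeta ((σ : ℂ) + t * I)
        * Complex.Gamma ((σ : ℂ) + t * I) * Complex.Gamma (s + (c:ℂ) - (σ:ℂ) - t * I)
        / Complex.Gamma (s + (c:ℂ))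
        = F (s - (σ : ℂ) - t * I) * riemannZeta ((σ : ℂ) + t * I)
          * (Complex.Gamma ((σ : ℂ) + t * I) * Complex.Gamma (s + (c:ℂ) - (σ:ℂ) - t * I)
            / Complex.Gamma (s + (c:ℂ))) := by ring
    rw [hsplit, norm_mul, norm_mul, keyq, norm_div, norm_mul]
    have hquot : ‖∏ j ∈ Finset.range k, ((s + (c:ℂ)) + j)‖
          * ‖Complex.betaIntegral (((σ:ℂ) + t * I) + k) (s + (c:ℂ) - (σ:ℂ) - t * I)‖
          / ‖∏ j ∈ Finset.range k, (((σ:ℂ) + t * I) + j)‖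
        ≤ (E * (1 + |s.im|))^k * Br / ((1 + |t|)/2)^k :=
      div_le_div₀ (by positivity)
        (mul_le_mul hQ hBb (norm_nonneg _) (by positivity))
        (by positivity) hPlb
    have hstep : (1 + |t|)^A / (1 + |t|)^(k:ℕ) ≤ (1 + t^2)⁻¹ := by
      rw [div_le_iff₀ (by positivity), inv_mul_eq_div, le_div_iff₀ ht2]
      have h1 : ((1 + |t|):ℝ)^(k:ℕ) = (1 + |t|) ^ ((k:ℕ):ℝ) := (Real.rpow_natCast _ _).symm
      rw [h1, show ((k:ℕ):ℝ) = A + (((k:ℕ):ℝ) - A) by ring, Real.rpow_add hbase]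
      apply mul_le_mul_of_nonneg_left _ (by positivity)
      calc (1 + t^2) ≤ (1 + |t|)^(2:ℝ) := by
            rw [show ((2:ℝ)) = ((2:ℕ):ℝ) by norm_num, Real.rpow_natCast]
            nlinarith [abs_nonneg t, _root_.sq_abs t]
        _ ≤ (1 + |t|) ^ (((k:ℕ):ℝ) - A) := by
            apply Real.rpow_le_rpow_of_exponent_le (by linarith [abs_nonneg t])
            linarith
    calc ‖F (s - (σ : ℂ) - t * I)‖ * ‖riemannZeta ((σ : ℂ) + t * I)‖
          * (‖∏ j ∈ Finset.range k, ((s + (c:ℂ)) + j)‖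
            * ‖Complex.betaIntegral (((σ:ℂ) + t * I) + k) (s + (c:ℂ) - (σ:ℂ) - t * I)‖
            / ‖∏ j ∈ Finset.range k, (((σ:ℂ) + t * I) + j)‖)
        ≤ (C₁ * ((1 + |s.im|) ^ A * (1 + |t|) ^ A)) * Z
            * ((E * (1 + |s.im|))^k * Br / ((1 + |t|)/2)^k) :=
          mul_le_mul (mul_le_mul hFt hζ (norm_nonneg _) (by positivity)) hquot
            (by positivity) (by positivity)
      _ = Ky * ((1 + |t|)^A / (1 + |t|)^(k:ℕ)) := by
          rw [hKydef, hKcdef, mul_pow]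
          have h2k : ((1 + |t|)/2)^k ≠ 0 := by positivity
          have h1k : ((1 + |t|):ℝ)^(k:ℕ) ≠ 0 := by positivity
          rw [div_pow]
          field_simp
      _ ≤ Ky * (1 + t^2)⁻¹ := mul_le_mul_of_nonneg_left hstep hKy
  -- continuity / measurability
  have c1 : Continuous fun t : ℝ => s - (σ:ℂ) - t*I := by fun_prop
  have c2 : Continuous fun t : ℝ => (σ:ℂ) + t*I := by fun_prop
  have c3 : Continuous fun t : ℝ => s + (c:ℂ) - (σ:ℂ) - t*I := by fun_prop
  have hcont : Continuous (fun t : ℝ =>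
      F (s - (σ : ℂ) - t * I) * riemannZeta ((σ : ℂ) + t * I)
        * Complex.Gamma ((σ : ℂ) + t * I) * Complex.Gamma (s + (c:ℂ) - (σ:ℂ) - t * I)
        / Complex.Gamma (s + (c:ℂ))) := by
    refine Continuous.div_const ?_ _
    refine (((hF.comp c1).mul ?_).mul ?_).mul ?_
    · rw [continuous_iff_continuousAt]; intro t
      refine ContinuousAt.comp ?_ c2.continuousAt
      refine (differentiableAt_riemannZeta ?_).continuousAt
      intro h
      have := congrArg Complex.re h
      simp at this
      linarith
    · rw [continuous_iff_continuousAt]; intro t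
      refine ContinuousAt.comp ?_ c2.continuousAt
      refine (Complex.differentiableAt_Gamma _ ?_).continuousAt
      intro m h
      have h2 : σ = -(m:ℝ) := by simpa using congrArg Complex.re h
      have : (0:ℝ) ≤ (m:ℝ) := m.cast_nonneg
      linarith
    · rw [continuous_iff_continuousAt]; intro t
      refine ContinuousAt.comp ?_ c3.continuousAt
      refine (Complex.differentiableAt_Gamma _ ?_).continuousAt
      intro m h
      have h2 : τ + c - σ = -(m:ℝ) := by
        have := congrArg Complex.re h
        simpa [hs] using this
      have : (0:ℝ) ≤ (m:ℝ) := m.cast_nonneg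
      linarith
  have hg : Integrable (fun t : ℝ => Ky * (1 + t^2)⁻¹) := integrable_inv_one_add_sq.const_mul Ky
  have hf : Integrable (fun t : ℝ =>
      F (s - (σ : ℂ) - t * I) * riemannZeta ((σ : ℂ) + t * I)
        * Complex.Gamma ((σ : ℂ) + t * I) * Complex.Gamma (s + (c:ℂ) - (σ:ℂ) - t * I)
        / Complex.Gamma (s + (c:ℂ))) :=
    hg.mono' hcont.aestronglyMeasurable (ae_of_all _ hbnd)
  refine ⟨hf, ?_⟩
  have hnormInt : ‖∫ t : ℝ,
      F (s - (σ : ℂ) - t * I) * riemannZeta ((σ : ℂ) + t * I)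
        * Complex.Gamma ((σ : ℂ) + t * I) * Complex.Gamma (s + (c:ℂ) - (σ:ℂ) - t * I)
        / Complex.Gamma (s + (c:ℂ))‖ ≤ Ky * Iv := by
    refine (norm_integral_le_integral_norm _).trans ?_
    calc ∫ t : ℝ, ‖F (s - (σ : ℂ) - t * I) * riemannZeta ((σ : ℂ) + t * I)
          * Complex.Gamma ((σ : ℂ) + t * I) * Complex.Gamma (s + (c:ℂ) - (σ:ℂ) - t * I)
          / Complex.Gamma (s + (c:ℂ))‖
        ≤ ∫ t : ℝ, Ky * (1 + t^2)⁻¹ := integral_mono hf.norm hg hbnd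
      _ = Ky * Iv := by rw [MeasureTheory.integral_const_mul, hIvEq]
  have hcoef : ‖(1 / (2 * (Real.pi : ℂ)))‖ ≤ 1 := by
    rw [norm_div, norm_one]
    rw [show (2 * (Real.pi:ℂ)) = ((2 * Real.pi : ℝ) : ℂ) by push_cast; ring]
    rw [Complex.norm_real, Real.norm_eq_abs]
    rw [_root_.abs_of_pos (by positivity)]
    rw [div_le_one (by positivity)]
    linarith [Real.pi_gt_three]
  rw [norm_mul]
  have hy1 : (1 + |s.im|) ^ A * (1 + |s.im|)^(k:ℕ) = (1 + |s.im|) ^ (A + (k:ℝ)) := by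
    rw [← Real.rpow_natCast (1 + |s.im|) k, ← Real.rpow_add hbasy]
  calc ‖(1 / (2 * (Real.pi : ℂ)))‖ * ‖∫ t : ℝ,
          F (s - (σ : ℂ) - t * I) * riemannZeta ((σ : ℂ) + t * I)
            * Complex.Gamma ((σ : ℂ) + t * I) * Complex.Gamma (s + (c:ℂ) - (σ:ℂ) - t * I)
            / Complex.Gamma (s + (c:ℂ))‖
      ≤ 1 * (Ky * Iv) := mul_le_mul hcoef hnormInt (norm_nonneg _) (by norm_num)
    _ = (Kc * Iv) * ((1 + |s.im|) ^ (A + (k:ℝ))) := by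
        rw [one_mul, hKydef, ← hy1]; ring
    _ ≤ (Kc * Iv + 1) * (1 + |s.im|) ^ (A + (k:ℝ)) := by
        apply mul_le_mul_of_nonneg_right (by linarith) (Real.rpow_nonneg (by positivity) _)
end
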